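/- arXiv:1903.03945 — 2 statements merged into one kernel-verified Lean document; each statement's English description precedes it below -/
import Mathlib

section
/- Let k₁, k₂ > 0 and Ã = !![0, 1; −k₁, −k₂]. If x : ℝ → (Fin 2 → ℝ) satisfies x'(t) = Ã.mulVec (x t) for all t ≥ 0 (in the sense of HasDerivAt), then x(t) → 0 as t → ∞. -/
open Matrix Filter

/-- Since `Ã = !![0, 1; −k₁, −k₂]` is Hurwitz for `k₁, k₂ > 0`, every solution
of `x' = Ã x` converges to the origin. -/
theorem pitch_error_converges (k₁ k₂ : ℝ) (hk₁ : 0 < k₁) (hk₂ : 0 < k₂)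
    (x : ℝ → Fin 2 → ℝ)
    (hx : ∀ t : ℝ, 0 ≤ t →
      HasDerivAt x ((!![0, 1; -k₁, -k₂] : Matrix (Fin 2) (Fin 2) ℝ).mulVec (x t)) t) :
    Tendsto x atTop (nhds 0) := by
  have h1 : ∀ t : ℝ, 0 ≤ t → HasDerivAt (fun t => x t 0) (x t 1) t := by
    intro t ht
    have := (hasDerivAt_pi.1 (hx t ht)) 0
    simpa [Matrix.mulVec, dotProduct, Fin.sum_univ_two] using this
  have h2 : ∀ t : ℝ, 0 ≤ t →
      HasDerivAt (fun t => x t 1) (-k₁ * x t 0 - k₂ * x t 1) t := by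
    intro t ht
    have := (hasDerivAt_pi.1 (hx t ht)) 1
    simpa [Matrix.mulVec, dotProduct, Fin.sum_univ_two, sub_eq_add_neg] using this
  set g : ℝ → ℝ :=
    fun t => (k₂^2/2 + k₁) * (x t 0)^2 + k₂ * (x t 0 * x t 1) + (x t 1)^2 with hg
  have hg' : ∀ t : ℝ, 0 ≤ t →
      HasDerivAt g (-(k₁*k₂) * (x t 0)^2 - k₂ * (x t 1)^2) t := by
    intro t ht
    have := ((((h1 t ht).pow 2).const_mul (k₂^2/2 + k₁)).add
      (((h1 t ht).mul (h2 t ht)).const_mul k₂)).add ((h2 t ht).pow 2)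
    refine this.congr_deriv ?_
    push_cast
    ring
  have hgle : ∀ t : ℝ,
      g t ≤ (k₂^2/2 + k₁ + k₂/2) * (x t 0)^2 + (1 + k₂/2) * (x t 1)^2 := by
    intro t
    simp only [hg]
    nlinarith [sq_nonneg (x t 0 - x t 1), sq_nonneg (x t 0 + x t 1)]
  have hglb : ∀ t : ℝ, k₁ * (x t 0)^2 + (x t 1)^2/2 ≤ g t := by
    intro t
    simp only [hg]
    nlinarith [sq_nonneg (k₂ * x t 0 + x t 1), sq_nonneg (x t 0), sq_nonneg (x t 1)]
  clear_value g
  obtain ⟨c, hcpos, e1, e2⟩ : ∃ c : ℝ, 0 < c ∧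
      c * (k₂^2/2 + k₁ + k₂/2) ≤ k₁*k₂ ∧ c * (1 + k₂/2) ≤ k₂ := by
    refine ⟨min (k₁*k₂/(k₂^2/2 + k₁ + k₂/2)) (k₂/(1 + k₂/2)),
      lt_min (by positivity) (by positivity), ?_, ?_⟩
    · exact (le_div_iff₀ (by positivity)).1 (min_le_left _ _)
    · exact (le_div_iff₀ (by positivity)).1 (min_le_right _ _)
  have key : ∀ t : ℝ, 0 ≤ t →
      -(k₁*k₂) * (x t 0)^2 - k₂ * (x t 1)^2 + c * g t ≤ 0 := by
    intro t ht
    have f1 := mul_le_mul_of_nonneg_left (hgle t) hcpos.le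
    have f2 := mul_le_mul_of_nonneg_right e1 (sq_nonneg (x t 0))
    have f3 := mul_le_mul_of_nonneg_right e2 (sq_nonneg (x t 1))
    nlinarith [f1, f2, f3]
  set h : ℝ → ℝ := fun t => g t * Real.exp (c*t) with hh
  have hh' : ∀ t : ℝ, 0 ≤ t → HasDerivAt h
      ((-(k₁*k₂) * (x t 0)^2 - k₂ * (x t 1)^2 + c * g t) * Real.exp (c*t)) t := by
    intro t ht
    have he : HasDerivAt (fun t : ℝ => Real.exp (c*t)) (Real.exp (c*t) * c) t := by
      have := (Real.hasDerivAt_exp (c*t)).comp t ((hasDerivAt_id t).const_mul c)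
      simpa [Function.comp_def] using this
    have := (hg' t ht).mul he
    refine this.congr_deriv ?_
    ring
  have hcont : ContinuousOn h (Set.Ici 0) :=
    fun t ht => ((hh' t ht).continuousAt).continuousWithinAt
  have hanti : AntitoneOn h (Set.Ici 0) := by
    apply antitoneOn_of_deriv_nonpos (convex_Ici 0) hcont
    · intro t ht
      rw [interior_Ici] at ht
      exact ((hh' t (le_of_lt ht)).differentiableAt).differentiableWithinAt
    · intro t ht
      rw [interior_Ici] at ht
      rw [(hh' t ht.le).deriv]
      exact mul_nonpos_of_nonpos_of_nonneg (key t ht.le) (Real.exp_pos _).le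
  have hbound : ∀ t : ℝ, 0 ≤ t → g t ≤ g 0 * Real.exp (-(c*t)) := by
    intro t ht
    have h0 : g t * Real.exp (c*t) ≤ g 0 := by
      have := hanti (Set.self_mem_Ici) ht ht
      simpa [hh] using this
    calc g t = g t * Real.exp (c*t) * Real.exp (-(c*t)) := by
          rw [mul_assoc, ← Real.exp_add]; simp
      _ ≤ g 0 * Real.exp (-(c*t)) :=
          mul_le_mul_of_nonneg_right h0 (Real.exp_pos _).le
  have hgz : Tendsto g atTop (nhds 0) := by
    have hlim0 : Tendsto (fun t => Real.exp (-(c*t))) atTop (nhds 0) :=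
      Real.tendsto_exp_neg_atTop_nhds_zero.comp (tendsto_id.const_mul_atTop hcpos)
    have hlim : Tendsto (fun t => g 0 * Real.exp (-(c*t))) atTop (nhds 0) := by
      simpa using hlim0.const_mul (g 0)
    have hlo : ∀ᶠ t in atTop, (0:ℝ) ≤ g t := by
      filter_upwards with t
      linarith [hglb t, mul_nonneg hk₁.le (sq_nonneg (x t 0)), sq_nonneg (x t 1)]
    have hhi : ∀ᶠ t in atTop, g t ≤ g 0 * Real.exp (-(c*t)) := by
      filter_upwards [eventually_ge_atTop (0:ℝ)] with t ht using hbound t ht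
    exact tendsto_of_tendsto_of_tendsto_of_le_of_le' tendsto_const_nhds hlim hlo hhi
  have hsq0 : Tendsto (fun t => (x t 0)^2) atTop (nhds 0) := by
    have hhi : ∀ᶠ t in atTop, (x t 0)^2 ≤ g t / k₁ := by
      filter_upwards with t
      rw [le_div_iff₀ hk₁]
      nlinarith [hglb t, sq_nonneg (x t 1)]
    have hlim : Tendsto (fun t => g t / k₁) atTop (nhds 0) := by
      simpa using hgz.div_const k₁
    exact tendsto_of_tendsto_of_tendsto_of_le_of_le' tendsto_const_nhds hlim
      (Eventually.of_forall fun t => sq_nonneg _) hhi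
  have hsq1 : Tendsto (fun t => (x t 1)^2) atTop (nhds 0) := by
    have hhi : ∀ᶠ t in atTop, (x t 1)^2 ≤ 2 * g t := by
      filter_upwards with t
      nlinarith [hglb t, mul_nonneg hk₁.le (sq_nonneg (x t 0))]
    have hlim : Tendsto (fun t => 2 * g t) atTop (nhds 0) := by
      simpa using hgz.const_mul 2
    exact tendsto_of_tendsto_of_tendsto_of_le_of_le' tendsto_const_nhds hlim
      (Eventually.of_forall fun t => sq_nonneg _) hhi
  have comp0 : Tendsto (fun t => x t 0) atTop (nhds 0) := by
    rw [tendsto_zero_iff_abs_tendsto_zero]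
    have := (Real.continuous_sqrt.tendsto' 0 0 Real.sqrt_zero).comp hsq0
    simpa [Function.comp_def, Real.sqrt_sq_eq_abs] using this
  have comp1 : Tendsto (fun t => x t 1) atTop (nhds 0) := by
    rw [tendsto_zero_iff_abs_tendsto_zero]
    have := (Real.continuous_sqrt.tendsto' 0 0 Real.sqrt_zero).comp hsq1
    simpa [Function.comp_def, Real.sqrt_sq_eq_abs] using this
  rw [tendsto_pi_nhds]
  intro i
  fin_cases i
  · simpa using comp0
  · simpa using comp1
end

section
/- Let k_v, k_γ, k_s, k_ω > 0, let Q be a symmetric positive-semidefinite real 2×2 matrix, let l ≥ 0 and v_d ≥ √(2l), and let ṽ, γ̃, e_s, e_d, ψ̃, d ∈ ℝ and θ̃ ∈ (Fin 2 → ℝ) satisfy |ṽ| ≤ √(2l) and e_d·sin(d) ≤ 0. Then −k_v·ṽ² − k_γ·γ̃² − θ̃ ⬝ᵥ (Q.mulVec θ̃) − k_s·|e_s| + ṽ·e_d·sin(d) + v_d·e_d·sin(d) − k_ω·|ψ̃ − d| ≤ 0. -/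
open Real Matrix

/-- On the invariant sublevel set (`|ṽ| ≤ √(2l)`) and with `v_d ≥ √(2l)`, the
total Lyapunov derivative is nonpositive. -/
theorem total_lyapunov_derivative_nonpos
    (kv kγ ks kω : ℝ) (hkv : 0 < kv) (hkγ : 0 < kγ) (hks : 0 < ks)
    (hkω : 0 < kω)
    (Q : Matrix (Fin 2) (Fin 2) ℝ) (hQs : Q.IsSymm) (hQ : Q.PosSemidef)
    (l vd : ℝ) (hl : 0 ≤ l) (hvd : Real.sqrt (2 * l) ≤ vd)
    (vt γt es ed ψ d : ℝ) (θ : Fin 2 → ℝ)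
    (hvt : |vt| ≤ Real.sqrt (2 * l)) (hed : ed * Real.sin d ≤ 0) :
    -kv * vt ^ 2 - kγ * γt ^ 2 - θ ⬝ᵥ Q.mulVec θ - ks * |es|
        + vt * ed * Real.sin d + vd * ed * Real.sin d - kω * |ψ - d| ≤ 0 := by
  have hθ : 0 ≤ θ ⬝ᵥ Q.mulVec θ := by simpa using hQ.dotProduct_mulVec_nonneg θ
  have hvt' : -vd ≤ vt := by
    have := abs_le.mp hvt
    linarith
  have hsum : vt * ed * Real.sin d + vd * ed * Real.sin d ≤ 0 := by
    have : (vt + vd) * (ed * Real.sin d) ≤ 0 :=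
      mul_nonpos_of_nonneg_of_nonpos (by linarith) hed
    nlinarith
  have h1 : 0 ≤ kv * vt ^ 2 := mul_nonneg hkv.le (sq_nonneg _)
  have h2 : 0 ≤ kγ * γt ^ 2 := mul_nonneg hkγ.le (sq_nonneg _)
  have h3 : 0 ≤ ks * |es| := mul_nonneg hks.le (abs_nonneg _)
  have h4 : 0 ≤ kω * |ψ - d| := mul_nonneg hkω.le (abs_nonneg _)
  linarith
end
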